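/- Let F₃(x,δ) = 2x³δ² + (x⁴−1)δ − 2x. Then for δ⁴ ∉ {0,1}, the four roots in x of F₃(x,δ) = 0 are distinct and none of them lies in {0, ∞, δ, −δ, 1/δ, −1/δ, 1, −1, i, −i}. -/

import Mathlib

open Polynomial

/-- Let `F₃(x,δ) = 2x³δ² + (x⁴−1)δ − 2x = δx⁴ + 2δ²x³ − 2x − δ`, viewed as a
degree-4 polynomial in `x`. For `δ⁴ ∉ {0,1}` (over an algebraically closed field of
characteristic zero), its four roots in `x` are distinct and none of them lies in
`{0, δ, −δ, 1/δ, −1/δ, 1, −1, i, −i}` (nor is `∞` a root: the leading coefficient `δ` is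
nonzero, as witnessed by the factorization). -/
theorem stmt_12 {K : Type*} [Field K] [CharZero K] [IsAlgClosed K] (δ : K)
    (h0 : δ ^ 4 ≠ 0) (h1 : δ ^ 4 ≠ 1) (i : K) (hi : i ^ 2 = -1) :
    ∃ r : Fin 4 → K, Function.Injective r ∧
      (∀ x : K, 2 * x ^ 3 * δ ^ 2 + (x ^ 4 - 1) * δ - 2 * x =
        δ * ((x - r 0) * (x - r 1) * (x - r 2) * (x - r 3))) ∧
      ∀ k : Fin 4, r k ≠ 0 ∧ r k ≠ δ ∧ r k ≠ -δ ∧ r k ≠ 1 / δ ∧ r k ≠ -(1 / δ) ∧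
        r k ≠ 1 ∧ r k ≠ -1 ∧ r k ≠ i ∧ r k ≠ -i := by
  classical
  have hδ : δ ≠ 0 := by
    intro h; exact h0 (by simp [h])
  set P : K[X] := C δ * X ^ 4 + C (2 * δ ^ 2) * X ^ 3 - C 2 * X - C δ with hPdef
  have hdeg : P.natDegree = 4 := by
    unfold P
    compute_degree!
  have hPne : P ≠ 0 := by
    intro h
    rw [h] at hdeg
    simp at hdeg
  have hlc : P.leadingCoeff = δ := by
    rw [Polynomial.leadingCoeff, hdeg, hPdef]
    simp only [coeff_add, coeff_sub, coeff_C_mul, coeff_X_pow, coeff_C, coeff_X]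
    norm_num
  have hsplit : Splits P := IsAlgClosed.splits P
  have hcard : P.roots.card = 4 := by
    rw [Polynomial.splits_iff_card_roots.mp hsplit, hdeg]
  -- key: no common root of P and its derivative
  have hder : P.derivative = C (4 * δ) * X ^ 3 + C (6 * δ ^ 2) * X ^ 2 - C 2 := by
    rw [hPdef]
    simp [derivative_pow, C_mul, C_pow, map_ofNat]
    ring
  have key : ∀ x : K, P.eval x = 0 → P.derivative.eval x = 0 → False := by
    intro x hx hx'
    have e1 : δ * x ^ 4 + 2 * δ ^ 2 * x ^ 3 - 2 * x - δ = 0 := by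
      have := hx
      unfold P at this
      simpa using this
    have e2 : 4 * δ * x ^ 3 + 6 * δ ^ 2 * x ^ 2 - 2 = 0 := by
      rw [hder] at hx'
      simpa using hx'
    apply h1
    linear_combination (-(1:K)/6) * (6 * δ^3 - 8 * δ^2 * x - 8 * δ * x^2) * e1 +
      (-(1:K)/6) * (-3 - 2 * δ^3 * x + 3 * δ^2 * x^2 + 2 * δ * x^3) * e2
  have hnd : P.roots.Nodup := by
    rw [Multiset.nodup_iff_count_le_one]
    intro x
    by_contra hcnt
    push_neg at hcnt
    have h2 : 2 ≤ P.rootMultiplicity x := by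
      rwa [← Polynomial.count_roots]
    obtain ⟨q, hq⟩ := (Polynomial.le_rootMultiplicity_iff hPne).mp h2
    apply key x
    · rw [hq]; simp
    · rw [hq]
      simp [derivative_pow]
  -- extract the four roots
  have hlen : P.roots.toList.length = 4 := by
    rw [Multiset.length_toList, hcard]
  obtain ⟨a, b, c, d, habcd⟩ : ∃ a b c d : K, P.roots = {a, b, c, d} := by
    have e := Multiset.coe_toList P.roots
    rcases hx : P.roots.toList with _ | ⟨a, _ | ⟨b, _ | ⟨c, _ | ⟨d, _ | ⟨x, t⟩⟩⟩⟩⟩ <;>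
      rw [hx] at hlen e <;>
      simp only [List.length_cons, List.length_nil] at hlen
    any_goals omega
    exact ⟨a, b, c, d, by rw [← e]; rfl⟩
  have hfac : P = C δ * ((X - C a) * (X - C b) * (X - C c) * (X - C d)) := by
    have := hsplit.eq_prod_roots
    rw [hlc, habcd] at this
    rw [this]
    simp only [Multiset.insert_eq_cons, Multiset.map_cons, Multiset.map_singleton,
      Multiset.prod_cons, Multiset.prod_singleton]
    ring
  -- scalar consequences before discarding the polynomial
  have hroot : ∀ y : K, y ∈ P.roots → δ * y ^ 4 + 2 * δ ^ 2 * y ^ 3 - 2 * y - δ = 0 := by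
    intro y hy
    have := (Polynomial.mem_roots hPne).mp hy
    rw [hPdef] at this
    simpa using this
  have ha := hroot a (by rw [habcd]; simp)
  have hb := hroot b (by rw [habcd]; simp)
  have hc := hroot c (by rw [habcd]; simp)
  have hd := hroot d (by rw [habcd]; simp)
  have hpoint : ∀ x : K, 2 * x ^ 3 * δ ^ 2 + (x ^ 4 - 1) * δ - 2 * x =
      δ * ((x - a) * (x - b) * (x - c) * (x - d)) := by
    intro x
    have := congrArg (Polynomial.eval x) hfac
    rw [hPdef] at this
    simp only [eval_add, eval_sub, eval_mul, eval_pow, eval_C, eval_X] at this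
    linear_combination this
  -- distinctness
  rw [habcd] at hnd
  simp only [Multiset.insert_eq_cons, Multiset.nodup_cons, Multiset.mem_cons,
    Multiset.mem_singleton, Multiset.nodup_singleton, not_or, and_true] at hnd
  obtain ⟨⟨hab, hac, had⟩, ⟨hbc, hbd⟩, hcd⟩ := hnd
  clear hfac hder key hsplit hcard hlen hdeg hlc habcd hroot hPne
  clear hPdef
  clear_value P
  clear P
  have hδ2 : δ ^ 2 ≠ 1 := by
    intro h; exact h1 (by rw [show (4:ℕ) = 2*2 by rfl, pow_mul, h]; ring)
  have hδ2' : δ ^ 2 ≠ -1 := by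
    intro h; exact h1 (by rw [show (4:ℕ) = 2*2 by rfl, pow_mul, h]; ring)
  have hine : i ≠ 0 := by
    intro h; rw [h] at hi; norm_num at hi
  refine ⟨![a, b, c, d], ?_, ?_, ?_⟩
  · intro j k h
    fin_cases j <;> fin_cases k <;> simp_all
  · intro x
    have e0 : (![a, b, c, d] : Fin 4 → K) 0 = a := rfl
    have e1 : (![a, b, c, d] : Fin 4 → K) 1 = b := rfl
    have e2 : (![a, b, c, d] : Fin 4 → K) 2 = c := rfl
    have e3 : (![a, b, c, d] : Fin 4 → K) 3 = d := rfl
    rw [e0, e1, e2, e3]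
    exact hpoint x
  · intro k
    have he : δ * (![a, b, c, d] k) ^ 4 + 2 * δ ^ 2 * (![a, b, c, d] k) ^ 3
        - 2 * (![a, b, c, d] k) - δ = 0 := by
      fin_cases k
      · exact ha
      · exact hb
      · exact hc
      · exact hd
    set y := ![a, b, c, d] k with hy
    refine ⟨?_, ?_, ?_, ?_, ?_, ?_, ?_, ?_, ?_⟩
    · intro h; rw [h] at he; simp at he; exact hδ he
    · intro h; rw [h] at he
      have h5 : δ * (δ ^ 4 - 1) = 0 := by linear_combination (1/3 : K) * he
      rcases mul_eq_zero.mp h5 with h' | h'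
      · exact hδ h'
      · exact h1 (by linear_combination h')
    · intro h; rw [h] at he
      have h5 : δ * (δ ^ 4 - 1) = 0 := by linear_combination -he
      rcases mul_eq_zero.mp h5 with h' | h'
      · exact hδ h'
      · exact h1 (by linear_combination h')
    · intro h; rw [h] at he
      field_simp at he
      have h5 : δ ^ 5 * (δ ^ 4 - 1) = 0 := by linear_combination (-δ ^ 5) * he
      rcases mul_eq_zero.mp h5 with h' | h'
      · exact hδ (pow_eq_zero_iff (by norm_num : (5:ℕ) ≠ 0) |>.mp h')
      · exact h1 (by linear_combination h')
    · intro h; rw [h] at he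
      field_simp at he
      have h5 : δ ^ 5 * (δ ^ 4 - 1) = 0 := by linear_combination (-δ ^ 5) * he
      rcases mul_eq_zero.mp h5 with h' | h'
      · exact hδ (pow_eq_zero_iff (by norm_num : (5:ℕ) ≠ 0) |>.mp h')
      · exact h1 (by linear_combination h')
    · intro h; rw [h] at he
      exact hδ2 (by linear_combination (1/2) * he)
    · intro h; rw [h] at he
      exact hδ2 (by linear_combination (-1/2) * he)
    · intro h; rw [h] at he
      have h5 : i * (δ ^ 2 + 1) = 0 := by
        linear_combination (-1/2 : K) * he + ((δ * i ^ 2 - δ + 2 * δ ^ 2 * i) / 2) * hi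
      rcases mul_eq_zero.mp h5 with h' | h'
      · exact hine h'
      · exact hδ2' (by linear_combination h')
    · intro h; rw [h] at he
      have h5 : i * (δ ^ 2 + 1) = 0 := by
        linear_combination (1/2 : K) * he - ((δ * i ^ 2 - δ - 2 * δ ^ 2 * i) / 2) * hi
      rcases mul_eq_zero.mp h5 with h' | h'
      · exact hine h'
      · exact hδ2' (by linear_combination h')
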